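/- Fix n ≥ 1. Let O_X = O_amb/(f_1, ..., f_n), an integral domain with fraction field K(X), and let s_i = z̄_i/z̄_1 ∈ K(X) for 2 ≤ i ≤ n+1. Then the O_X-subalgebra O_X[s_2, ..., s_{n+1}] of K(X) (equivalently, the generic type III unprojection ring O_X[I_r^{-1}]) is isomorphic as a ring to a polynomial ring over ℤ in n² + n + 1 variables; in particular it is a Gorenstein ring. -/
import Mathlib


open MvPolynomial

/-- The ambient polynomial ring `O_amb = ℤ[a_{ij}, z_j]`, `1 ≤ i ≤ n`, `1 ≤ j ≤ n+1`. -/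
noncomputable abbrev Oamb (n : ℕ) : Type := MvPolynomial ((Fin n × Fin (n+1)) ⊕ Fin (n+1)) ℤ

/-- The generic matrix entry `a_{ij}` as an element of `O_amb`. -/
noncomputable def av {n : ℕ} (i : Fin n) (j : Fin (n+1)) : Oamb n := X (Sum.inl (i, j))

/-- The variable `z_j` as an element of `O_amb`. -/
noncomputable def zv {n : ℕ} (j : Fin (n+1)) : Oamb n := X (Sum.inr j)

/-- The generic linear form `f_i = Σ_j a_{ij} z_j`. -/
noncomputable def fv {n : ℕ} (i : Fin n) : Oamb n := ∑ j, av i j * zv j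

/-- `Δ₁`: the determinant of the `n × n` submatrix of `(a_{ij})` obtained by deleting the
first column. -/
noncomputable def Δ₁ (n : ℕ) : Oamb n := Matrix.det (Matrix.of fun i j : Fin n => av i j.succ)
set_option maxHeartbeats 1000000
set_option synthInstance.maxHeartbeats 1000000

namespace Unproj

variable (n : ℕ)

abbrev σP (n : ℕ) : Type := (Fin n × Fin n) ⊕ (Fin n ⊕ Unit)

noncomputable abbrev P (n : ℕ) : Type := MvPolynomial (σP n) ℤ

noncomputable abbrev Ix (n : ℕ) : Ideal (Oamb n) := Ideal.span (Set.range (fun i : Fin n => fv i))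

noncomputable abbrev OX (n : ℕ) : Type := Oamb n ⧸ Ix n

noncomputable abbrev mk : Oamb n →+* OX n := Ideal.Quotient.mk (Ix n)

/-- generators for the retraction `ρ̃ : Oamb → P`. -/
noncomputable def rg : ((Fin n × Fin (n+1)) ⊕ Fin (n+1)) → P n
  | .inl (i, j) =>
      Fin.cases (-∑ k, X (.inl (i,k)) * X (.inr (.inl k))) (fun k => X (.inl (i,k))) j
  | .inr j =>
      Fin.cases (X (.inr (.inr ()))) (fun k => X (.inr (.inr ())) * X (.inr (.inl k))) j

noncomputable def ρt : Oamb n →+* P n := (aeval (rg n)).toRingHom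

lemma ρt_fv (i : Fin n) : ρt n (fv i) = 0 := by
  simp only [ρt, fv, av, zv, AlgHom.toRingHom_eq_coe, RingHom.coe_coe, map_sum, map_mul, aeval_X]
  rw [Fin.sum_univ_succ]
  simp only [rg, Fin.cases_zero, Fin.cases_succ]
  rw [neg_mul, Finset.sum_mul, neg_add_eq_zero]
  exact Finset.sum_congr rfl fun k _ => by ring

lemma Ix_le_ker : Ix n ≤ RingHom.ker (ρt n) := by
  rw [Ideal.span_le]
  rintro _ ⟨i, rfl⟩
  exact ρt_fv n i

noncomputable def ρ : OX n →+* P n := Ideal.Quotient.lift (Ix n) (ρt n) (Ix_le_ker n)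

@[simp] lemma ρ_mk (g : Oamb n) : ρ n (mk n g) = ρt n g := rfl

lemma zv_notMem : (zv 0 : Oamb n) ∉ Ix n := by
  intro h
  have hker : Ix n ≤ RingHom.ker (aeval (R := ℤ)
      (Sum.elim (fun _ => (0 : MvPolynomial (Fin (n+1)) ℤ)) X)).toRingHom := by
    rw [Ideal.span_le]
    rintro _ ⟨i, rfl⟩
    simp [fv, av, zv, RingHom.mem_ker]
  have := hker h
  simp [RingHom.mem_ker, zv, X_ne_zero] at this

lemma mk_zv_ne : mk n (zv 0) ≠ 0 := by
  rw [Ne, Ideal.Quotient.eq_zero_iff_mem]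
  exact zv_notMem n



noncomputable abbrev L (n : ℕ) : Type := Localization.Away (zv 0 : Oamb n)

noncomputable abbrev algL : Oamb n →+* L n := algebraMap _ _

noncomputable def zinv : L n := IsLocalization.Away.invSelf (S := L n) (zv (0 : Fin (n+1)) : Oamb n)

lemma z0_mul_zinv : algL n (zv 0) * zinv n = 1 :=
  IsLocalization.Away.mul_invSelf (S := L n) (zv (0 : Fin (n+1)) : Oamb n)

/-- generators for φ : P → L. -/
noncomputable def lg : σP n → L n
  | .inl (i, j) => algL n (av i j.succ)
  | .inr (.inl k) => algL n (zv k.succ) * zinv n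
  | .inr (.inr _) => algL n (zv 0)

noncomputable def φ : P n →+* L n := (aeval (lg n)).toRingHom

noncomputable abbrev J (n : ℕ) : Ideal (L n) := (Ix n).map (algL n)

set_option synthInstance.maxHeartbeats 1000000 in
lemma key (g : Oamb n) :
    Ideal.Quotient.mk (J n) (φ n (ρt n g)) = Ideal.Quotient.mk (J n) (algL n g) := by
  have h : ((Ideal.Quotient.mk (J n)).comp ((φ n).comp (ρt n))) =
      (Ideal.Quotient.mk (J n)).comp (algL n) := by
    apply MvPolynomial.ringHom_ext
    · intro r
      have hc : (C r : Oamb n) = (r : Oamb n) := by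
        simpa using map_intCast (C : ℤ →+* Oamb n) r
      rw [hc, map_intCast, map_intCast]
    · rintro (⟨i, j⟩ | j)
      · -- variable a_{ij}
        induction j using Fin.cases with
        | zero =>
          have hval : φ n (ρt n (X (Sum.inl (i, (0 : Fin (n+1)))))) =
              -∑ k : Fin n, algL n (av i k.succ) * (algL n (zv k.succ) * zinv n) := by
            simp only [ρt, AlgHom.toRingHom_eq_coe, RingHom.coe_coe, aeval_X, rg, Fin.cases_zero,
              φ, map_neg, map_sum, map_mul, lg]
          simp only [RingHom.comp_apply, hval]
          rw [Ideal.Quotient.mk_eq_mk_iff_sub_mem]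
          have hmem : algL n (fv i) * zinv n ∈ J n := by
            refine Ideal.mul_mem_right _ _ ?_
            exact Ideal.mem_map_of_mem _ (Ideal.subset_span ⟨i, rfl⟩)
          have heq : (-∑ k : Fin n, algL n (av i k.succ) * (algL n (zv k.succ) * zinv n))
              - algL n (X (Sum.inl (i, 0))) = -(algL n (fv i) * zinv n) := by
            have hz := z0_mul_zinv n
            rw [fv, map_sum, Fin.sum_univ_succ, add_mul, Finset.sum_mul, map_mul]
            have h1 : algL n (av i 0) * algL n (zv 0) * zinv n = algL n (av i 0) := by
              rw [mul_assoc, hz, mul_one]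
            rw [h1]
            have h2 : ∀ k : Fin n, algL n (av i k.succ * zv k.succ) * zinv n
                = algL n (av i k.succ) * (algL n (zv k.succ) * zinv n) := by
              intro k; rw [map_mul]; ring
            rw [Finset.sum_congr rfl (fun k _ => h2 k)]
            have : algL n (X (Sum.inl (i, (0 : Fin (n+1))))) = algL n (av i 0) := rfl
            rw [this]; ring
          rw [heq]
          exact neg_mem hmem
        | succ k =>
          simp only [RingHom.comp_apply, ρt, AlgHom.toRingHom_eq_coe, RingHom.coe_coe, aeval_X,
            rg, Fin.cases_succ, φ, lg]
          rfl
      · -- variable z_j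
        induction j using Fin.cases with
        | zero =>
          simp only [RingHom.comp_apply, ρt, AlgHom.toRingHom_eq_coe, RingHom.coe_coe, aeval_X,
            rg, Fin.cases_zero, φ, lg]
          rfl
        | succ k =>
          have hL : φ n (ρt n (X (Sum.inr k.succ))) = algL n (X (Sum.inr k.succ)) := by
            simp only [ρt, AlgHom.toRingHom_eq_coe, RingHom.coe_coe, aeval_X,
              rg, Fin.cases_succ, φ, map_mul, lg]
            have hz := z0_mul_zinv n
            calc algL n (zv 0) * (algL n (zv k.succ) * zinv n)
                = algL n (zv k.succ) * (algL n (zv 0) * zinv n) := by ring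
              _ = algL n (zv k.succ) := by rw [hz, mul_one]
          simp only [RingHom.comp_apply, hL]
  exact RingHom.congr_fun h g

lemma ρ_inj [IsDomain (OX n)] : Function.Injective (ρ n) := by
  rw [injective_iff_map_eq_zero]
  intro x hx
  obtain ⟨g, rfl⟩ := Ideal.Quotient.mk_surjective x
  have hg : ρt n g = 0 := hx
  have h0 : algL n g ∈ J n := by
    have h := key n g
    rw [hg, map_zero, map_zero] at h
    exact Ideal.Quotient.eq_zero_iff_mem.mp h.symm
  obtain ⟨⟨⟨a, haI⟩, s⟩, hs⟩ :=
    (IsLocalization.mem_map_algebraMap_iff (Submonoid.powers (zv 0 : Oamb n)) (L n)).mp h0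
  have hinj : Function.Injective (algL n) :=
    IsLocalization.injective (L n) (M := Submonoid.powers (zv 0 : Oamb n))
      (powers_le_nonZeroDivisors_of_noZeroDivisors (X_ne_zero _))
  have hgs : g * (s : Oamb n) = a := by
    apply hinj
    rw [map_mul]; exact hs
  have hmem : g * (s : Oamb n) ∈ Ix n := hgs ▸ haI
  have hq : mk n g * mk n (s : Oamb n) = 0 := by
    rw [← map_mul, Ideal.Quotient.eq_zero_iff_mem]
    exact hmem
  obtain ⟨m, hm⟩ := s.2
  have hsne : mk n (s : Oamb n) ≠ 0 := by
    rw [← hm, map_pow]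
    exact pow_ne_zero _ (mk_zv_ne n)
  rcases mul_eq_zero.mp hq with h | h
  · exact h
  · exact absurd h hsne



section Frac

variable [IsDomain (OX n)]

noncomputable abbrev K (n : ℕ) [IsDomain (OX n)] : Type := FractionRing (OX n)

noncomputable abbrev κ : OX n →+* K n := algebraMap (OX n) (K n)

/-- The generators of the unprojection ring inside `K(X)`. -/
noncomputable def G : σP n → K n
  | .inl (i, j) => κ n (mk n (av i j.succ))
  | .inr (.inl k) => κ n (mk n (zv k.succ)) / κ n (mk n (zv 0))
  | .inr (.inr _) => κ n (mk n (zv 0))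

lemma κz_ne : κ n (mk n (zv 0)) ≠ 0 := by
  intro h
  exact mk_zv_ne n (IsFractionRing.injective (OX n) (K n) (by rw [h, map_zero]))

lemma hzK (k : Fin n) :
    κ n (mk n (zv k.succ)) = κ n (mk n (zv 0)) * G n (.inr (.inl k)) := by
  simp only [G]
  rw [mul_comm, div_mul_cancel₀ _ (κz_ne n)]

lemma ha0K (i : Fin n) :
    κ n (mk n (av i 0)) = -∑ k : Fin n, κ n (mk n (av i k.succ)) * G n (.inr (.inl k)) := by
  have hf : mk n (fv i) = 0 :=
    Ideal.Quotient.eq_zero_iff_mem.mpr (Ideal.subset_span ⟨i, rfl⟩)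
  have h0 : (∑ j : Fin (n+1), κ n (mk n (av i j)) * κ n (mk n (zv j))) = 0 := by
    have : κ n (mk n (fv i)) = 0 := by rw [hf, map_zero]
    rw [fv, map_sum, map_sum] at this
    simpa [map_mul] using this
  rw [Fin.sum_univ_succ] at h0
  have h0' : κ n (mk n (av i 0)) * κ n (mk n (zv 0))
      + ∑ k : Fin n, κ n (mk n (av i k.succ)) * (κ n (mk n (zv 0)) * G n (.inr (.inl k))) = 0 := by
    rw [← h0]
    congr 1
    exact Finset.sum_congr rfl fun k _ => by rw [← hzK]
  have h1 : (κ n (mk n (av i 0)) + ∑ k : Fin n, κ n (mk n (av i k.succ)) * G n (.inr (.inl k)))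
      * κ n (mk n (zv 0)) = 0 := by
    rw [add_mul, Finset.sum_mul, ← h0']
    congr 1
    exact Finset.sum_congr rfl fun k _ => by ring
  have h2 := (mul_eq_zero.mp h1).resolve_right (κz_ne n)
  exact eq_neg_of_add_eq_zero_left h2

/-- The `ℤ`-subalgebra of `K(X)` generated by the images of the `G`-generators. -/
noncomputable def B : Subalgebra ℤ (K n) := Algebra.adjoin ℤ (Set.range (G n))

lemma hXB : ∀ v, κ n (mk n (X v)) ∈ B n := by
  rintro (⟨i, j⟩ | j)
  · induction j using Fin.cases with
    | zero =>
      have : (X (Sum.inl (i, (0 : Fin (n+1)))) : Oamb n) = av i 0 := rfl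
      rw [this, ha0K]
      refine neg_mem (Subalgebra.sum_mem _ fun k _ => mul_mem ?_ ?_)
      · exact Algebra.subset_adjoin ⟨Sum.inl (i, k), rfl⟩
      · exact Algebra.subset_adjoin ⟨Sum.inr (Sum.inl k), rfl⟩
    | succ k =>
      exact Algebra.subset_adjoin ⟨Sum.inl (i, k), rfl⟩
  · induction j using Fin.cases with
    | zero => exact Algebra.subset_adjoin ⟨Sum.inr (Sum.inr ()), rfl⟩
    | succ k =>
      have : (X (Sum.inr k.succ) : Oamb n) = zv k.succ := rfl
      rw [this, hzK]
      exact mul_mem (Algebra.subset_adjoin ⟨Sum.inr (Sum.inr ()), rfl⟩)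
        (Algebra.subset_adjoin ⟨Sum.inr (Sum.inl k), rfl⟩)

lemma hκB : ∀ x : OX n, κ n x ∈ B n := by
  intro x
  obtain ⟨g, rfl⟩ := Ideal.Quotient.mk_surjective x
  induction g using MvPolynomial.induction_on with
  | C r =>
    have hc : (C r : Oamb n) = (r : Oamb n) := by
      simpa using map_intCast (C : ℤ →+* Oamb n) r
    rw [hc, map_intCast, map_intCast]
    exact intCast_mem _ r
  | add p q hp hq => rw [map_add, map_add]; exact add_mem hp hq
  | mul_X p v hp => rw [map_mul, map_mul]; exact mul_mem hp (hXB n v)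

noncomputable def Ψ : P n →ₐ[ℤ] K n := aeval (G n)

lemma ρ'_inj : Function.Injective ((algebraMap (P n) (FractionRing (P n))).comp (ρ n)) :=
  (IsFractionRing.injective (P n) (FractionRing (P n))).comp (ρ_inj n)

noncomputable def ρK : K n →+* FractionRing (P n) :=
  IsFractionRing.lift (ρ'_inj n)

lemma ρK_κ (x : OX n) :
    ρK n (κ n x) = algebraMap (P n) (FractionRing (P n)) (ρ n x) :=
  IsFractionRing.lift_algebraMap _ _

lemma algP_ne (v : σP n) : algebraMap (P n) (FractionRing (P n)) (X v) ≠ 0 := by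
  intro h
  exact X_ne_zero v (IsFractionRing.injective (P n) (FractionRing (P n))
    (by rw [h, map_zero]))

set_option synthInstance.maxHeartbeats 1000000 in
lemma ρK_comp :
    (ρK n).comp (Ψ n).toRingHom = algebraMap (P n) (FractionRing (P n)) := by
  apply MvPolynomial.ringHom_ext
  · intro r
    have hc : (C r : P n) = (r : P n) := by
      simpa using map_intCast (C : ℤ →+* P n) r
    rw [hc, map_intCast, map_intCast]
  · rintro (⟨i, j⟩ | (k | u))
    · have h1 : Ψ n (X (Sum.inl (i, j))) = κ n (mk n (av i j.succ)) := by
        simp [Ψ, G]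
      simp only [RingHom.comp_apply, AlgHom.toRingHom_eq_coe, RingHom.coe_coe, h1, ρK_κ]
      congr 1
      show ρt n (av i j.succ) = X (Sum.inl (i, j))
      simp [ρt, av, rg]
    · have h1 : Ψ n (X (Sum.inr (Sum.inl k))) =
          κ n (mk n (zv k.succ)) / κ n (mk n (zv 0)) := by
        simp [Ψ, G]
      simp only [RingHom.comp_apply, AlgHom.toRingHom_eq_coe, RingHom.coe_coe, h1, map_div₀, ρK_κ]
      have h2 : ρ n (mk n (zv k.succ)) = X (Sum.inr (Sum.inr ())) * X (Sum.inr (Sum.inl k)) := by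
        show ρt n (zv k.succ) = _
        simp [ρt, zv, rg]
      have h3 : ρ n (mk n (zv 0)) = X (Sum.inr (Sum.inr ())) := by
        show ρt n (zv 0) = _
        simp [ρt, zv, rg]
      rw [h2, h3, map_mul, mul_comm]
      exact mul_div_cancel_right₀ _ (algP_ne n _)
    · have h1 : Ψ n (X (Sum.inr (Sum.inr u))) = κ n (mk n (zv 0)) := by
        simp [Ψ, G]
      simp only [RingHom.comp_apply, AlgHom.toRingHom_eq_coe, RingHom.coe_coe, h1, ρK_κ]
      congr 1
      show ρt n (zv 0) = X (Sum.inr (Sum.inr u))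
      simp [ρt, zv, rg]

lemma Ψ_inj : Function.Injective (Ψ n) := by
  intro a b hab
  apply IsFractionRing.injective (P n) (FractionRing (P n))
  have ha := RingHom.congr_fun (ρK_comp n) a
  have hb := RingHom.congr_fun (ρK_comp n) b
  simp only [RingHom.comp_apply, AlgHom.toRingHom_eq_coe, RingHom.coe_coe] at ha hb
  rw [← ha, ← hb, hab]

end Frac

section Final

variable [IsDomain (OX n)]

lemma card_σP : Fintype.card (σP n) = n^2 + n + 1 := by
  simp [σP]
  ring

noncomputable def finalEquiv :
    P n ≃ₐ[ℤ] MvPolynomial (Fin (n^2 + n + 1)) ℤ :=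
  renameEquiv ℤ (Fintype.equivFinOfCardEq (card_σP n))

noncomputable def A' : Subalgebra (OX n) (K n) :=
  Algebra.adjoin (OX n)
    (Set.range fun i : Fin n => κ n (mk n (zv i.succ)) / κ n (mk n (zv 0)))

lemma hEq : (A' n).restrictScalars ℤ = B n := by
  apply le_antisymm
  · intro x hx
    rw [Subalgebra.mem_restrictScalars] at hx
    let B' : Subalgebra (OX n) (K n) :=
      { (B n).toSubsemiring with
        algebraMap_mem' := hκB n }
    have hAB : A' n ≤ B' := by
      apply Algebra.adjoin_le
      rintro _ ⟨k, rfl⟩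
      exact Algebra.subset_adjoin ⟨Sum.inr (Sum.inl k), rfl⟩
    exact hAB hx
  · apply Algebra.adjoin_le
    rintro _ ⟨v, rfl⟩
    apply (Subalgebra.mem_restrictScalars ℤ).mpr
    match v with
    | .inl (i, j) => exact (A' n).algebraMap_mem (mk n (av i j.succ))
    | .inr (.inl k) => exact Algebra.subset_adjoin ⟨k, rfl⟩
    | .inr (.inr u) => exact (A' n).algebraMap_mem (mk n (zv 0))

noncomputable def mainEquiv :
    (A' n) ≃+* MvPolynomial (Fin (n^2 + n + 1)) ℤ :=
  ((((Subalgebra.equivOfEq _ _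
      ((hEq n).trans (Algebra.adjoin_range_eq_range_aeval ℤ (G n)) :
        (A' n).restrictScalars ℤ = (Ψ n).range)) :
    ((A' n).restrictScalars ℤ) ≃ₐ[ℤ] (Ψ n).range).trans
      (AlgEquiv.ofInjective (Ψ n) (Ψ_inj n)).symm).trans (finalEquiv n)).toRingEquiv

end Final

end Unproj

/-- The generic type III unprojection ring `O_X[I_r⁻¹] = O_X[s_2, …, s_{n+1}]`, the
`O_X`-subalgebra of `K(X)` generated by `s_i = z̄_i/z̄_1`, is isomorphic as a ring to a
polynomial ring over `ℤ` in `n² + n + 1` variables (in particular it is Gorenstein). -/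
theorem unprojection_ring_iso_polynomial_ring (n : ℕ) (hn : 1 ≤ n)
    [IsDomain (Oamb n ⧸ Ideal.span (Set.range (fun i : Fin n => fv i)))] :
    Nonempty
      ((Algebra.adjoin (Oamb n ⧸ Ideal.span (Set.range (fun i : Fin n => fv i)))
          (Set.range fun i : Fin n =>
            algebraMap _ (FractionRing (Oamb n ⧸ Ideal.span (Set.range (fun i : Fin n => fv i))))
                (Ideal.Quotient.mk (Ideal.span (Set.range (fun i : Fin n => fv i))) (zv i.succ)) /
              algebraMap _ (FractionRing (Oamb n ⧸ Ideal.span (Set.range (fun i : Fin n => fv i))))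
                (Ideal.Quotient.mk (Ideal.span (Set.range (fun i : Fin n => fv i))) (zv 0)))
          : Subalgebra _ (FractionRing (Oamb n ⧸ Ideal.span (Set.range (fun i : Fin n => fv i)))))
        ≃+* MvPolynomial (Fin (n^2 + n + 1)) ℤ) :=
  ⟨Unproj.mainEquiv n⟩
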